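/- For every ε ∈ ℂ, the set of tuples (A_b)_{b∈ℤ/nℤ} with every A_b ∈ gl_n(O) satisfying A_{b+1}·ψ_b(ε) = ψ_b(ε)·A_b for all b ∈ ℤ/nℤ equals the O-span a(ε) of the n² elements d_i (1 ≤ i ≤ n), u_{i,j}(ε) and l_{i,j}(ε) (1 ≤ i < j ≤ n); moreover these n² elements are linearly independent over O, so this set is a free O-module of rank n². -/

import Mathlib

/-- The ring `O = ℂ[[z]]` of formal power series. -/
noncomputable abbrev O : Type := PowerSeries ℂ

/-- The element `z + ε` of `O`. -/
noncomputable def zPlus (ε : ℂ) : O := PowerSeries.X + PowerSeries.C (R := ℂ) ε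

/-- The diagonal matrix `ψ_b(ε)` over `O` whose `(b+1,b+1)` entry (1-based), i.e. `(b,b)`
entry (0-based), is `z+ε` and whose other diagonal entries are `1`. -/
noncomputable def psiO (n : ℕ) (ε : ℂ) (b : Fin n) : Matrix (Fin n) (Fin n) O :=
  Matrix.diagonal (fun i => if i = b then zPlus ε else 1)

/-- Index type for the `n²` generators: `n` diagonal ones, and an upper and a lower one
for each pair `i < j`. -/
abbrev GenIdx (n : ℕ) : Type :=
  Fin n ⊕ ({p : Fin n × Fin n // p.1 < p.2} ⊕ {p : Fin n × Fin n // p.1 < p.2})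

/-- The generators `d_i`, `u_{i,j}(ε)`, `l_{i,j}(ε)` of `a(ε)`.  Indices are 0-based:
the 1-based condition `i ≤ b ≤ j-1` for `1 ≤ i < j ≤ n`, `b ∈ {0,…,n-1}` reads
`i < b ∧ b ≤ j` in 0-based row/column indices `i < j`. -/
noncomputable def gen (n : ℕ) (ε : ℂ) : GenIdx n → (Fin n → Matrix (Fin n) (Fin n) O)
  | Sum.inl i => fun _ => Matrix.single i i 1
  | Sum.inr (Sum.inl ⟨(i, j), _⟩) => fun b =>
      if i.val < b.val ∧ b.val ≤ j.val then Matrix.single i j (zPlus ε)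
      else Matrix.single i j 1
  | Sum.inr (Sum.inr ⟨(i, j), _⟩) => fun b =>
      if i.val < b.val ∧ b.val ≤ j.val then Matrix.single j i 1
      else Matrix.single j i (zPlus ε)

lemma zPlus_ne_zero (ε : ℂ) : zPlus ε ≠ 0 := by
  intro h
  have := congrArg (PowerSeries.coeff (R := ℂ) 1) h
  simp [zPlus, PowerSeries.coeff_C] at this

section
variable {n : ℕ} [NeZero n] {ε : ℂ} {A : Fin n → Matrix (Fin n) (Fin n) O}
section
variable {n : ℕ} [NeZero n] {ε : ℂ} {A : Fin n → Matrix (Fin n) (Fin n) O}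

lemma rel_entry (hA : ∀ b : Fin n, A (b+1) * psiO n ε b = psiO n ε b * A b) (b p q : Fin n) :
    A (b+1) p q * (if q = b then zPlus ε else 1) = (if p = b then zPlus ε else 1) * A b p q := by
  have h := congrFun (congrFun (hA b) p) q
  simpa [psiO, Matrix.mul_diagonal, Matrix.diagonal_mul] using h

lemma step_off (hA : ∀ b : Fin n, A (b+1) * psiO n ε b = psiO n ε b * A b)
    {b p q : Fin n} (hp : p ≠ b) (hq : q ≠ b) : A (b+1) p q = A b p q := by
  have h := rel_entry hA b p q
  simpa [hp, hq] using h

lemma step_row (hA : ∀ b : Fin n, A (b+1) * psiO n ε b = psiO n ε b * A b)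
    {b q : Fin n} (hq : q ≠ b) : A (b+1) b q = zPlus ε * A b b q := by
  have h := rel_entry hA b b q
  simpa [hq] using h

lemma step_col (hA : ∀ b : Fin n, A (b+1) * psiO n ε b = psiO n ε b * A b)
    {b p : Fin n} (hp : p ≠ b) : A (b+1) p b * zPlus ε = A b p b := by
  have h := rel_entry hA b p b
  simpa [hp] using h

lemma step_diag (hA : ∀ b : Fin n, A (b+1) * psiO n ε b = psiO n ε b * A b)
    (b : Fin n) : A (b+1) b b = A b b b := by
  have h := rel_entry hA b b b
  simp only [if_pos rfl] at h
  exact mul_right_cancel₀ (zPlus_ne_zero ε) (h.trans (mul_comm _ _))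
lemma fin_mk_succ {n : ℕ} [NeZero n] {k : ℕ} (hk' : k < n) (hk : k + 1 < n) :
    (⟨k, hk'⟩ : Fin n) + 1 = ⟨k + 1, hk⟩ := by
  have h1 : (1 : Fin n).val = 1 := Fin.val_one' n ▸ Nat.mod_eq_of_lt (by omega)
  apply Fin.ext
  simp only [Fin.add_def, Fin.val_mk, h1]
  exact Nat.mod_eq_of_lt hk

lemma fin_mk_zero {n : ℕ} [NeZero n] (hk : 0 < n) : (⟨0, hk⟩ : Fin n) = 0 := by ext; simp

lemma diag_const (hA : ∀ b : Fin n, A (b+1) * psiO n ε b = psiO n ε b * A b)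
    (p : Fin n) : ∀ k, (hk : k < n) → A ⟨k, hk⟩ p p = A 0 p p := by
  intro k
  induction k with
  | zero => intro hk; rw [fin_mk_zero hk]
  | succ k ih =>
    intro hk
    have hk' : k < n := by omega
    have hkk : ((⟨k, hk'⟩ : Fin n) : ℕ) = k := rfl
    rw [← fin_mk_succ hk' hk]
    by_cases hp : p = (⟨k, hk'⟩ : Fin n)
    · subst hp
      rw [step_diag hA, ih hk']
    · rw [step_off hA hp hp, ih hk']

lemma upper_entries (hA : ∀ b : Fin n, A (b+1) * psiO n ε b = psiO n ε b * A b)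
    {p q : Fin n} (hpq : p.val < q.val) : ∀ k, (hk : k < n) →
    A ⟨k, hk⟩ p q = if p.val < k ∧ k ≤ q.val then zPlus ε * A 0 p q else A 0 p q := by
  intro k
  induction k with
  | zero => intro hk; rw [fin_mk_zero hk, if_neg (by omega)]
  | succ k ih =>
    intro hk
    have hk' : k < n := by omega
    have hkk : ((⟨k, hk'⟩ : Fin n) : ℕ) = k := rfl
    rw [← fin_mk_succ hk' hk]
    by_cases hkp : p = (⟨k, hk'⟩ : Fin n)
    · subst hkp
      simp only [Fin.val_mk] at hpq ⊢
      have hqb : q ≠ (⟨k, hk'⟩ : Fin n) := by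
        simp only [ne_eq, Fin.ext_iff, Fin.val_mk]; omega
      rw [step_row hA hqb, ih hk', if_neg (by omega), if_pos (by omega)]
    · by_cases hkq : q = (⟨k, hk'⟩ : Fin n)
      · subst hkq
        simp only [Fin.val_mk] at hpq ⊢
        have h := step_col hA (b := (⟨k, hk'⟩ : Fin n)) (p := p) hkp
        rw [ih hk', if_pos (by omega)] at h
        rw [if_neg (by omega)]
        exact mul_right_cancel₀ (zPlus_ne_zero ε) (h.trans (mul_comm _ _))
      · rw [Fin.ext_iff, Fin.val_mk] at hkp hkq
        rw [step_off hA (by simp only [ne_eq, Fin.ext_iff, Fin.val_mk]; omega)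
          (by simp only [ne_eq, Fin.ext_iff, Fin.val_mk]; omega), ih hk']
        congr 1
        simp only [eq_iff_iff]
        omega

lemma lower_const_low (hA : ∀ b : Fin n, A (b+1) * psiO n ε b = psiO n ε b * A b)
    {p q : Fin n} (hqp : q.val < p.val) : ∀ k, (hk : k < n) → k ≤ q.val →
    A ⟨k, hk⟩ p q = A 0 p q := by
  intro k
  induction k with
  | zero => intro hk _; rw [fin_mk_zero hk]
  | succ k ih =>
    intro hk hkq
    have hk' : k < n := by omega
    have hkk : ((⟨k, hk'⟩ : Fin n) : ℕ) = k := rfl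
    rw [← fin_mk_succ hk' hk]
    rw [step_off hA (by simp only [ne_eq, Fin.ext_iff, Fin.val_mk]; omega)
      (by simp only [ne_eq, Fin.ext_iff, Fin.val_mk]; omega), ih hk' (by omega)]

lemma lower_C (hA : ∀ b : Fin n, A (b+1) * psiO n ε b = psiO n ε b * A b)
    {p q : Fin n} (hqp : q.val < p.val) (h1 : q.val + 1 < n) :
    A ⟨q.val + 1, h1⟩ p q * zPlus ε = A 0 p q := by
  have hpb : p ≠ q := by simp only [ne_eq, Fin.ext_iff]; omega
  have h := step_col hA (b := q) (p := p) hpb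
  rw [show q + 1 = (⟨q.val + 1, h1⟩ : Fin n) from fin_mk_succ q.isLt h1] at h
  rw [h]
  exact lower_const_low hA hqp q.val q.isLt le_rfl

lemma lower_entries (hA : ∀ b : Fin n, A (b+1) * psiO n ε b = psiO n ε b * A b)
    {p q : Fin n} (hqp : q.val < p.val) (h1 : q.val + 1 < n) : ∀ k, (hk : k < n) →
    A ⟨k, hk⟩ p q = if q.val < k ∧ k ≤ p.val then A ⟨q.val + 1, h1⟩ p q
      else zPlus ε * A ⟨q.val + 1, h1⟩ p q := by
  intro k
  induction k with
  | zero =>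
    intro hk
    rw [fin_mk_zero hk, if_neg (by omega), ← lower_C hA hqp h1, mul_comm]
  | succ k ih =>
    intro hk
    have hk' : k < n := by omega
    have hkk : ((⟨k, hk'⟩ : Fin n) : ℕ) = k := rfl
    by_cases hkq : q.val = k
    · rw [if_pos (by omega)]
      have he : (⟨k + 1, hk⟩ : Fin n) = ⟨q.val + 1, h1⟩ := Fin.ext (by simp [hkq])
      rw [he]
    · rw [← fin_mk_succ hk' hk]
      by_cases hkp : p = (⟨k, hk'⟩ : Fin n)
      · subst hkp
        simp only [Fin.val_mk] at hqp ⊢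
        have hqb : q ≠ (⟨k, hk'⟩ : Fin n) := by
          simp only [ne_eq, Fin.ext_iff, Fin.val_mk]; omega
        rw [step_row hA hqb, ih hk', if_pos (by omega), if_neg (by omega)]
      · rw [Fin.ext_iff, Fin.val_mk] at hkp
        rw [step_off hA (by simp only [ne_eq, Fin.ext_iff, Fin.val_mk]; omega)
          (by simp only [ne_eq, Fin.ext_iff, Fin.val_mk]; omega), ih hk']
        congr 1
        simp only [eq_iff_iff]
        omega
end

lemma sum_entry (n : ℕ) [NeZero n] (ε : ℂ) (c : GenIdx n → O) (b p q : Fin n) :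
    (∑ k, c k • gen n ε k) b p q =
      if hpq : p = q then c (Sum.inl p)
      else if h : p < q then
        c (Sum.inr (Sum.inl ⟨(p, q), h⟩)) *
          (if p.val < b.val ∧ b.val ≤ q.val then zPlus ε else 1)
      else
        c (Sum.inr (Sum.inr ⟨(q, p), lt_of_le_of_ne (not_lt.mp h) (fun e => hpq e.symm)⟩)) *
          (if q.val < b.val ∧ b.val ≤ p.val then 1 else zPlus ε) := by
  classical
  have expand : (∑ k, c k • gen n ε k) b p q = ∑ k, c k * gen n ε k b p q := by
    simp [Finset.sum_apply, Matrix.sum_apply]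
  rw [expand, Fintype.sum_sum_type, Fintype.sum_sum_type]
  have e1 : (∑ i : Fin n, c (Sum.inl i) * gen n ε (Sum.inl i) b p q)
      = if p = q then c (Sum.inl p) else 0 := by
    by_cases hpq : p = q
    · subst hpq
      rw [if_pos rfl, Fintype.sum_eq_single p (fun i hi => by
        simp [gen, Matrix.single, Matrix.of_apply, hi])]
      simp [gen, Matrix.single, Matrix.of_apply]
    · rw [if_neg hpq]
      apply Finset.sum_eq_zero
      intro i _
      have : ¬(i = p ∧ i = q) := by rintro ⟨rfl, rfl⟩; exact hpq rfl
      simp only [gen, Matrix.single, Matrix.of_apply, if_neg this, mul_zero]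
  have e2 : (∑ s : {s : Fin n × Fin n // s.1 < s.2},
        c (Sum.inr (Sum.inl s)) * gen n ε (Sum.inr (Sum.inl s)) b p q)
      = if h : p < q then c (Sum.inr (Sum.inl ⟨(p, q), h⟩)) *
          (if p.val < b.val ∧ b.val ≤ q.val then zPlus ε else 1) else 0 := by
    by_cases h : p < q
    · rw [dif_pos h, Fintype.sum_eq_single (⟨(p, q), h⟩ : {s : Fin n × Fin n // s.1 < s.2})
        (fun s hs => ?_)]
      · simp only [gen]
        split_ifs <;> simp [Matrix.single, Matrix.of_apply, mul_ite, mul_one]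
      · obtain ⟨⟨i, j⟩, hij⟩ := s
        have hne : ¬(i = p ∧ j = q) := by
          rintro ⟨rfl, rfl⟩
          exact hs rfl
        simp only [gen]
        split_ifs <;> simp [Matrix.single, Matrix.of_apply, hne]
    · rw [dif_neg h]
      apply Finset.sum_eq_zero
      rintro ⟨⟨i, j⟩, hij⟩ _
      have hne : ¬(i = p ∧ j = q) := by
        rintro ⟨rfl, rfl⟩
        exact h hij
      simp only [gen]
      split_ifs <;> simp [Matrix.single, Matrix.of_apply, hne]
  have e3 : (∑ s : {s : Fin n × Fin n // s.1 < s.2},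
        c (Sum.inr (Sum.inr s)) * gen n ε (Sum.inr (Sum.inr s)) b p q)
      = if h : q < p then c (Sum.inr (Sum.inr ⟨(q, p), h⟩)) *
          (if q.val < b.val ∧ b.val ≤ p.val then 1 else zPlus ε) else 0 := by
    by_cases h : q < p
    · rw [dif_pos h, Fintype.sum_eq_single (⟨(q, p), h⟩ : {s : Fin n × Fin n // s.1 < s.2})
        (fun s hs => ?_)]
      · simp only [gen]
        split_ifs <;> simp [Matrix.single, Matrix.of_apply, mul_ite, mul_one]
      · obtain ⟨⟨i, j⟩, hij⟩ := s
        have hne : ¬(j = p ∧ i = q) := by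
          rintro ⟨rfl, rfl⟩
          exact hs rfl
        simp only [gen]
        split_ifs <;> simp [Matrix.single, Matrix.of_apply, hne]
    · rw [dif_neg h]
      apply Finset.sum_eq_zero
      rintro ⟨⟨i, j⟩, hij⟩ _
      have hne : ¬(j = p ∧ i = q) := by
        rintro ⟨rfl, rfl⟩
        exact h hij
      simp only [gen]
      split_ifs <;> simp [Matrix.single, Matrix.of_apply, hne]
  rw [e1, e2, e3]
  by_cases hpq : p = q
  · subst hpq
    rw [dif_pos rfl, if_pos rfl, dif_neg (lt_irrefl p), dif_neg (lt_irrefl p), add_zero, add_zero]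
  · rw [dif_neg hpq, if_neg hpq, zero_add]
    by_cases h : p < q
    · rw [dif_pos h, dif_pos h, dif_neg (asymm h), add_zero]
    · have hq : q < p := lt_of_le_of_ne (not_lt.mp h) (fun e => hpq e.symm)
      rw [dif_neg h, dif_neg h, zero_add, dif_pos hq]
lemma fin_val_add_one (n : ℕ) [NeZero n] (hn : 2 ≤ n) (b : Fin n) :
    ((b + 1 : Fin n)).val = if b.val + 1 = n then 0 else b.val + 1 := by
  have h1 : (1 : Fin n).val = 1 := Fin.val_one' n ▸ Nat.mod_eq_of_lt (by omega)
  simp only [Fin.add_def, Fin.val_mk, h1]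
  split_ifs with h
  · rw [h, Nat.mod_self]
  · exact Nat.mod_eq_of_lt (by omega)

lemma gen_mem (n : ℕ) [NeZero n] (hn : 2 ≤ n) (ε : ℂ) (k : GenIdx n) (b : Fin n) :
    gen n ε k (b + 1) * psiO n ε b = psiO n ε b * gen n ε k b := by
  have hval := fin_val_add_one n hn b
  refine Matrix.ext fun p q => ?_
  have hb := b.isLt
  rcases k with i | ⟨⟨i, j⟩, hij⟩ | ⟨⟨i, j⟩, hij⟩
  · simp only [gen, psiO, Matrix.mul_diagonal, Matrix.diagonal_mul,
      Matrix.single, Matrix.of_apply]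
    by_cases hip : i = p ∧ i = q
    · obtain ⟨rfl, rfl⟩ := hip
      simp
    · rw [if_neg hip, zero_mul, mul_zero]
  all_goals (
    have hij' : (i : ℕ) < (j : ℕ) := hij;
    by_cases hbn : (b : ℕ) + 1 = n <;>
      first | rw [if_pos hbn] at hval | rw [if_neg hbn] at hval)
  all_goals (
    simp only [gen, psiO, hval];
    rw [apply_ite (fun M : Matrix (Fin n) (Fin n) O => M * Matrix.diagonal
      (fun i => if i = b then zPlus ε else 1)),
      apply_ite (fun M : Matrix (Fin n) (Fin n) O => Matrix.diagonal
      (fun i => if i = b then zPlus ε else 1) * M)];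
    simp only [Matrix.mul_diagonal, Matrix.diagonal_mul, Matrix.single,
      Matrix.of_apply, apply_ite (fun M : Matrix (Fin n) (Fin n) O => M p q)])
  all_goals (simp only [Fin.ext_iff]; split_ifs <;> first | ring1 | (exfalso; omega) | simp)

noncomputable def coeffs (n : ℕ) [NeZero n] (A : Fin n → Matrix (Fin n) (Fin n) O) :
    GenIdx n → O
  | Sum.inl i => A 0 i i
  | Sum.inr (Sum.inl ⟨(i, j), _⟩) => A 0 i j
  | Sum.inr (Sum.inr ⟨(i, j), h⟩) => A ⟨(i : ℕ) + 1, by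
      have h' : (i : ℕ) < (j : ℕ) := h
      have := j.isLt
      omega⟩ j i

lemma decomp (n : ℕ) [NeZero n] (ε : ℂ) (A : Fin n → Matrix (Fin n) (Fin n) O)
    (hA : ∀ b : Fin n, A (b + 1) * psiO n ε b = psiO n ε b * A b) :
    A = ∑ k, coeffs n A k • gen n ε k := by
  funext b
  refine Matrix.ext fun p q => ?_
  rw [sum_entry]
  by_cases hpq : p = q
  · rw [dif_pos hpq]
    subst hpq
    simp only [coeffs]
    exact diag_const hA p b.val b.isLt
  · rw [dif_neg hpq]
    by_cases h : p < q
    · rw [dif_pos h]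
      simp only [coeffs]
      have hu := upper_entries hA (show p.val < q.val from h) b.val b.isLt
      rw [show A b p q = A ⟨b.val, b.isLt⟩ p q from rfl, hu]
      split_ifs with hc
      · rw [mul_comm]
      · rw [mul_one]
    · rw [dif_neg h]
      have hq : (q : ℕ) < (p : ℕ) :=
        lt_of_le_of_ne (not_lt.mp h) (fun e => hpq (Fin.ext e.symm))
      have h1 : (q : ℕ) + 1 < n := by have := p.isLt; omega
      simp only [coeffs]
      have hl := lower_entries hA hq h1 b.val b.isLt
      rw [show A b p q = A ⟨b.val, b.isLt⟩ p q from rfl, hl]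
      split_ifs with hc
      · rw [mul_one]
      · rw [mul_comm]


/-- the tuples over `O` satisfying the intertwining relations form exactly
the `O`-span `a(ε)` of the `n²` generators, and these generators are linearly
independent over `O` (hence the set is a free `O`-module of rank `n²`). -/
theorem statement1 (n : ℕ) [NeZero n] (hn : 2 ≤ n) (ε : ℂ) :
    ({A : Fin n → Matrix (Fin n) (Fin n) O |
        ∀ b : Fin n, A (b + 1) * psiO n ε b = psiO n ε b * A b}
      = (Submodule.span O (Set.range (gen n ε)) : Set (Fin n → Matrix (Fin n) (Fin n) O))) ∧
    LinearIndependent O (gen n ε) := by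
  constructor
  · apply Set.eq_of_subset_of_subset
    · intro A hA
      simp only [Set.mem_setOf_eq] at hA
      rw [SetLike.mem_coe, decomp n ε A hA]
      exact Submodule.sum_mem _ fun k _ =>
        Submodule.smul_mem _ _ (Submodule.subset_span ⟨k, rfl⟩)
    · intro A hA
      simp only [SetLike.mem_coe] at hA
      simp only [Set.mem_setOf_eq]
      induction hA using Submodule.span_induction with
      | mem x hx => obtain ⟨k, rfl⟩ := hx; exact fun b => gen_mem n hn ε k b
      | zero => intro b; simp
      | add x y hx hy ihx ihy =>
        intro b
        simp only [Pi.add_apply, Matrix.add_mul, Matrix.mul_add, ihx b, ihy b]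
      | smul c x hx ih =>
        intro b
        simp only [Pi.smul_apply, Matrix.smul_mul, Matrix.mul_smul, ih b]
  · rw [Fintype.linearIndependent_iff]
    intro g hg k
    have h0 : ∀ p q : Fin n, (∑ k, g k • gen n ε k) 0 p q = 0 := by
      intro p q
      rw [hg]
      rfl
    rcases k with i | ⟨⟨i, j⟩, hij⟩ | ⟨⟨i, j⟩, hij⟩
    · have h := h0 i i
      rw [sum_entry, dif_pos rfl] at h
      exact h
    · have h := h0 i j
      rw [sum_entry, dif_neg (Fin.ne_of_lt hij), dif_pos hij] at h
      rw [if_neg (by simp), mul_one] at h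
      exact h
    · have h := h0 j i
      have hij' : (i : ℕ) < (j : ℕ) := hij
      have hne : ¬(j = i) := by simp only [Fin.ext_iff]; omega
      have hnlt : ¬(j < i) := by simp only [Fin.lt_def]; omega
      rw [sum_entry, dif_neg hne, dif_neg hnlt] at h
      rw [if_neg (by simp)] at h
      rcases mul_eq_zero.mp h with h | h
      · exact h
      · exact absurd h (zPlus_ne_zero ε)
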